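/- Set J_{Z1} = (Q1,U1)^{(m11−1)_+} ∩ (Q1,U2)^{m12} ∩ (Q2,U1)^{(m21−1)_+}. Then (U1·J_{Z1}) ∩ (Q1^{m11} Q2^{m21}·(Q1,U2)^{(m12−m11)_+}) = U1 Q1^{m11} Q2^{m21}·(Q1,U2)^{(m12−m11)_+}, where for a polynomial f and an ideal I, f·I denotes the ideal of all multiples of elements of I by f. -/

import Mathlib

open MvPolynomial

section FatACIAux

/-! ### Generic commutative-algebra auxiliary lemmas -/

set_option linter.unusedSectionVars false
set_option linter.unusedVariables false

variable {A : Type*} [CommRing A] [IsDomain A]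

lemma fatACI_compB {v a b b' : A} (hb0 : b ≠ 0) (hcan : ∀ x, b ∣ a * x → b ∣ x)
    (h1 : ∀ g, v * g ∈ Ideal.span {a, b} → g ∈ Ideal.span {a, b})
    (h2 : ∀ g, v * g ∈ Ideal.span {a, b'} → g ∈ Ideal.span {a, b'}) :
    ∀ g, v * g ∈ Ideal.span {a, b * b'} → g ∈ Ideal.span {a, b * b'} := by
  intro g hg
  rw [Ideal.mem_span_pair] at hg ⊢
  obtain ⟨s, t, hst⟩ := hg
  obtain ⟨α, β, hαβ⟩ := Ideal.mem_span_pair.mp (h1 g (Ideal.mem_span_pair.mpr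
    ⟨s, t * b', by linear_combination hst⟩))
  have hdvd : b ∣ (v * α - s) := by
    apply hcan
    exact ⟨t * b' - v * β, by linear_combination v * hαβ - hst⟩
  obtain ⟨σ, hσ⟩ := hdvd
  have hσ' : σ * a = t * b' - v * β := by
    apply mul_left_cancel₀ hb0
    linear_combination v * hαβ - hst - a * hσ
  obtain ⟨γ, δ, hγδ⟩ := Ideal.mem_span_pair.mp (h2 β (Ideal.mem_span_pair.mpr
    ⟨-σ, t, by linear_combination -hσ'⟩))
  exact ⟨α + b * γ, δ, by linear_combination hαβ + b * hγδ⟩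

lemma fatACI_compA {v a a' b : A} (hb0 : b ≠ 0) (hcan : ∀ x, b ∣ a * x → b ∣ x)
    (h1 : ∀ g, v * g ∈ Ideal.span {a, b} → g ∈ Ideal.span {a, b})
    (h2 : ∀ g, v * g ∈ Ideal.span {a', b} → g ∈ Ideal.span {a', b}) :
    ∀ g, v * g ∈ Ideal.span {a * a', b} → g ∈ Ideal.span {a * a', b} := by
  intro g hg
  rw [Ideal.mem_span_pair] at hg ⊢
  obtain ⟨s, t, hst⟩ := hg
  obtain ⟨α, β, hαβ⟩ := Ideal.mem_span_pair.mp (h1 g (Ideal.mem_span_pair.mpr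
    ⟨s * a', t, by linear_combination hst⟩))
  have hdvd : b ∣ (v * α - s * a') := by
    apply hcan
    exact ⟨t - v * β, by linear_combination v * hαβ - hst⟩
  obtain ⟨σ, hσ⟩ := hdvd
  obtain ⟨γ, δ, hγδ⟩ := Ideal.mem_span_pair.mp (h2 α (Ideal.mem_span_pair.mpr
    ⟨s, σ, by linear_combination -hσ⟩))
  exact ⟨γ, a * δ + β, by linear_combination hαβ + a * hγδ⟩

lemma fatACI_nice_mul {v a b b' : A}
    (hb : b ≠ 0 ∧ (∀ x, b ∣ a * x → b ∣ x) ∧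
      (∀ g, v * g ∈ Ideal.span {a, b} → g ∈ Ideal.span {a, b}))
    (hb' : b' ≠ 0 ∧ (∀ x, b' ∣ a * x → b' ∣ x) ∧
      (∀ g, v * g ∈ Ideal.span {a, b'} → g ∈ Ideal.span {a, b'})) :
    b * b' ≠ 0 ∧ (∀ x, b * b' ∣ a * x → b * b' ∣ x) ∧
      (∀ g, v * g ∈ Ideal.span {a, b * b'} → g ∈ Ideal.span {a, b * b'}) := by
  obtain ⟨hb0, hbc, hbcol⟩ := hb
  obtain ⟨hb0', hbc', hbcol'⟩ := hb'
  refine ⟨mul_ne_zero hb0 hb0', ?_, fatACI_compB hb0 hbc hbcol hbcol'⟩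
  intro x hx
  obtain ⟨y, hy⟩ := hx
  obtain ⟨z, hz⟩ := hbc x ⟨b' * y, by linear_combination hy⟩
  obtain ⟨w, hw⟩ := hbc' z (by
    refine ⟨y, mul_left_cancel₀ hb0 ?_⟩
    linear_combination hy - a * hz)
  exact ⟨w, by rw [hz, hw]; ring⟩

lemma fatACI_nice_one {v a : A} :
    (1:A) ≠ 0 ∧ (∀ x, (1:A) ∣ a * x → (1:A) ∣ x) ∧
      (∀ g, v * g ∈ Ideal.span {a, (1:A)} → g ∈ Ideal.span {a, (1:A)}) := by
  refine ⟨one_ne_zero, fun x _ => one_dvd x, fun g _ => ?_⟩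
  have : Ideal.span {a, (1:A)} = ⊤ :=
    Ideal.eq_top_iff_one _ |>.mpr (Ideal.subset_span (by simp))
  rw [this]; trivial

lemma fatACI_pow_pair_le (q u : A) (n : ℕ) :
    Ideal.span {q, u} ^ n ≤ Ideal.span {q} ⊔ Ideal.span {u ^ n} := by
  induction n with
  | zero => simp [Ideal.one_eq_top]
  | succ n ih =>
      rw [pow_succ]
      calc Ideal.span {q, u} ^ n * Ideal.span {q, u}
          ≤ (Ideal.span {q} ⊔ Ideal.span {u ^ n}) * (Ideal.span {q} ⊔ Ideal.span {u}) := by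
            refine Ideal.mul_mono ih ?_
            rw [Ideal.span_insert]
        _ ≤ Ideal.span {q} ⊔ Ideal.span {u ^ (n+1)} := by
            rw [Ideal.mul_sup, Ideal.sup_mul, Ideal.sup_mul]
            refine sup_le (sup_le ?_ ?_) (sup_le ?_ ?_)
            · exact le_sup_of_le_left Ideal.mul_le_right
            · exact le_sup_of_le_left Ideal.mul_le_right
            · exact le_sup_of_le_left Ideal.mul_le_left
            · rw [Ideal.span_singleton_mul_span_singleton, ← pow_succ]
              exact le_sup_of_le_right le_rfl

/-- Colon by `q` lemma: `(span{q,u}^(e+1) + (u^d)) : q ≤ span{q,u}^e + (u^d)`. -/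
lemma fatACI_CQ {q u : A} (hu : u ≠ 0) (hcan : ∀ x, u ∣ q * x → u ∣ x) :
    ∀ e d h, q * h ∈ Ideal.span {q, u} ^ (e+1) ⊔ Ideal.span {u ^ d} →
      h ∈ Ideal.span {q, u} ^ e ⊔ Ideal.span {u ^ d} := by
  intro e
  induction e with
  | zero => intro d h _; simp [Ideal.one_eq_top]
  | succ e ih =>
      intro d h hh
      rcases d with _ | d
      · simp [Ideal.one_eq_top]
      · have h1 : Ideal.span {q, u} ^ (e+2) =
            Ideal.span {q} * (Ideal.span {q, u} ^ (e+1)) ⊔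
              Ideal.span {u} * (Ideal.span {q, u} ^ (e+1)) := by
          have hins : Ideal.span ({q, u} : Set A) = Ideal.span {q} ⊔ Ideal.span {u} :=
            Ideal.span_insert q {u}
          rw [pow_succ (Ideal.span ({q, u} : Set A)) (e+1),
            mul_comm (Ideal.span ({q, u} : Set A) ^ (e+1)) (Ideal.span ({q, u} : Set A))]
          nth_rewrite 1 [hins]
          rw [Ideal.sup_mul]
        have h2 : Ideal.span {u ^ (d+1)} = Ideal.span {u} * Ideal.span {u ^ d} := by
          rw [Ideal.span_singleton_mul_span_singleton, ← pow_succ']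
        have hdecomp : Ideal.span {q, u} ^ (e+2) ⊔ Ideal.span {u ^ (d+1)} =
            Ideal.span {q} * (Ideal.span {q, u} ^ (e+1)) ⊔
              Ideal.span {u} * (Ideal.span {q, u} ^ (e+1) ⊔ Ideal.span {u ^ d}) := by
          rw [h1, h2, Ideal.mul_sup, sup_assoc]
        rw [hdecomp] at hh
        obtain ⟨y', hy', z', hz', hyz⟩ := Submodule.mem_sup.mp hh
        obtain ⟨y, hy, hyq⟩ := Ideal.mem_span_singleton_mul.mp hy'
        obtain ⟨ζ, hζ, hζu⟩ := Ideal.mem_span_singleton_mul.mp hz'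
        have hqh : q * (h - y) = u * ζ := by linear_combination -hyz - hyq - hζu
        obtain ⟨χ, hχ⟩ := hcan (h - y) ⟨ζ, hqh⟩
        have hζχ : q * χ = ζ := by
          apply mul_left_cancel₀ hu
          linear_combination hqh - q * hχ
        have hχmem : χ ∈ Ideal.span {q, u} ^ e ⊔ Ideal.span {u ^ d} :=
          ih d χ (by rw [hζχ]; exact hζ)
        have hh2 : h = y + u * χ := by linear_combination hχ
        rw [hh2]
        refine Submodule.add_mem _ (Submodule.mem_sup_left hy) ?_
        obtain ⟨y2, hy2, z2, hz2, hyz2⟩ := Submodule.mem_sup.mp hχmem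
        rw [← hyz2, mul_add]
        refine Submodule.add_mem _ (Submodule.mem_sup_left ?_) (Submodule.mem_sup_right ?_)
        · rw [pow_succ']
          exact Ideal.mul_mem_mul (Ideal.subset_span (by simp)) hy2
        · obtain ⟨w, hw⟩ := Ideal.mem_span_singleton.mp hz2
          exact Ideal.mem_span_singleton.mpr ⟨w, by rw [hw]; ring⟩

lemma fatACI_relPrime_of_prime_not_dvd {p q : A} (hp : Prime p) (h : ¬ p ∣ q) :
    IsRelPrime p q := by
  intro d hdp hdq
  obtain ⟨e, he⟩ := hdp
  rcases hp.irreducible.isUnit_or_isUnit he with h1 | h2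
  · exact h1
  · exfalso
    apply h
    obtain ⟨u, rfl⟩ := h2
    exact dvd_trans ⟨↑u⁻¹, by rw [he]; simp⟩ hdq

end FatACIAux

section FatACIMvAux

/-! ### MvPolynomial-specific auxiliary lemmas -/

set_option linter.unusedSectionVars false
set_option linter.unusedVariables false

variable {k : Type*} [Field k]

lemma fatACI_sub_congr (v : Fin 4 → MvPolynomial (Fin 4) k)
    (J : Ideal (MvPolynomial (Fin 4) k)) (hv : ∀ i, X i - v i ∈ J)
    (f : MvPolynomial (Fin 4) k) : f - aeval v f ∈ J := by
  induction f using MvPolynomial.induction_on with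
  | C a => simp
  | add p q hp hq =>
      have := J.add_mem hp hq
      rw [sub_add_sub_comm] at this
      simpa [map_add] using this
  | mul_X p i hp =>
      have : p * X i - aeval v (p * X i) =
          (p - aeval v p) * X i + aeval v p * (X i - v i) := by
        rw [map_mul, aeval_X]; ring
      rw [this]
      exact J.add_mem (J.mul_mem_right _ hp) (J.mul_mem_left _ (hv i))

lemma fatACI_kill_pair {i j : Fin 4} (hij : i ≠ j) {a b : k} (h : ¬(a = 0 ∧ b = 0)) :
    ∃ p q : MvPolynomial (Fin 4) k,
      (X i - p ∈ Ideal.span {C a * X i + C b * X j}) ∧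
      (X j - q ∈ Ideal.span {C a * X i + C b * X j}) ∧
      (C a * p + C b * q = 0) ∧
      (∀ c' d' : k, c' * b - d' * a ≠ 0 → C c' * p + C d' * q ≠ 0) := by
  rcases eq_or_ne b 0 with hb | hb
  · have ha : a ≠ 0 := fun ha => h ⟨ha, hb⟩
    have haa : (C a : MvPolynomial (Fin 4) k) * C a⁻¹ = 1 := by
      rw [← map_mul, mul_inv_cancel₀ ha, map_one]
    refine ⟨C (-(b/a)) * X j, X j, ?_, by simp, ?_, ?_⟩
    · apply Ideal.mem_span_singleton.mpr
      refine ⟨C a⁻¹, ?_⟩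
      simp only [div_eq_mul_inv, map_mul, map_neg]
      linear_combination (-(X i : MvPolynomial (Fin 4) k)) * haa
    · simp only [div_eq_mul_inv, map_mul, map_neg]
      linear_combination (-(C b * X j : MvPolynomial (Fin 4) k)) * haa
    · intro c' d' hdet
      have key : C c' * (C (-(b/a)) * X j) + C d' * X j
          = C (-(c' * b - d' * a) * a⁻¹) * X j := by
        simp only [div_eq_mul_inv, map_mul, map_neg, map_sub]
        linear_combination (-(C d' * X j : MvPolynomial (Fin 4) k)) * haa
      rw [key]
      refine mul_ne_zero (C_ne_zero.mpr ?_) (X_ne_zero j)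
      exact mul_ne_zero (neg_ne_zero.mpr hdet) (inv_ne_zero ha)
  · have hbb : (C b : MvPolynomial (Fin 4) k) * C b⁻¹ = 1 := by
      rw [← map_mul, mul_inv_cancel₀ hb, map_one]
    refine ⟨X i, C (-(a/b)) * X i, by simp, ?_, ?_, ?_⟩
    · apply Ideal.mem_span_singleton.mpr
      refine ⟨C b⁻¹, ?_⟩
      simp only [div_eq_mul_inv, map_mul, map_neg]
      linear_combination (-(X j : MvPolynomial (Fin 4) k)) * hbb
    · simp only [div_eq_mul_inv, map_mul, map_neg]
      linear_combination (-(C a * X i : MvPolynomial (Fin 4) k)) * hbb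
    · intro c' d' hdet
      have key : C c' * X i + C d' * (C (-(a/b)) * X i)
          = C ((c' * b - d' * a) * b⁻¹) * X i := by
        simp only [div_eq_mul_inv, map_mul, map_neg, map_sub]
        linear_combination (-(C c' * X i : MvPolynomial (Fin 4) k)) * hbb
      rw [key]
      refine mul_ne_zero (C_ne_zero.mpr ?_) (X_ne_zero i)
      exact mul_ne_zero hdet (inv_ne_zero hb)

lemma fatACI_form_ne_zero {i j : Fin 4} (hij : i ≠ j) {a b : k} (h : ¬(a = 0 ∧ b = 0)) :
    C a * X i + C b * X j ≠ 0 := by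
  intro h0
  rcases eq_or_ne b 0 with hb | hb
  · rcases eq_or_ne a 0 with ha | ha
    · exact h ⟨ha, hb⟩
    · have := congrArg (coeff (Finsupp.single i 1)) h0
      simp [coeff_add, coeff_C_mul, coeff_X', Finsupp.single_eq_single_iff, hij, hij.symm] at this
      exact ha this
  · have := congrArg (coeff (Finsupp.single j 1)) h0
    simp [coeff_add, coeff_C_mul, coeff_X', Finsupp.single_eq_single_iff, hij, hij.symm] at this
    exact hb this

lemma fatACI_prime_linear {i j : Fin 4} (hij : i ≠ j) {a b : k} (h : ¬(a = 0 ∧ b = 0)) :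
    Prime (C a * X i + C b * X j) := by
  classical
  obtain ⟨p, q, hp, hq, hpq, -⟩ := fatACI_kill_pair hij h
  set L : MvPolynomial (Fin 4) k := C a * X i + C b * X j with hL
  have hL0 : L ≠ 0 := fatACI_form_ne_zero hij h
  set v : Fin 4 → MvPolynomial (Fin 4) k := fun l => if l = i then p else if l = j then q else X l
    with hv
  have hvmem : ∀ l, X l - v l ∈ Ideal.span {L} := by
    intro l
    by_cases hli : l = i
    · subst hli; simpa [v] using hp
    · by_cases hlj : l = j
      · subst hlj; simpa [v, hli] using hq
      · simp [v, hli, hlj]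
  have hCa : ∀ r : k, aeval v (C r : MvPolynomial (Fin 4) k) = C r := fun r => by
    rw [aeval_C, algebraMap_eq]
  have hvL : aeval v L = 0 := by
    rw [hL, map_add, map_mul, map_mul, hCa, hCa, aeval_X, aeval_X]
    have h1 : v i = p := by simp [v]
    have h2 : v j = q := by simp [v, hij.symm]
    rw [h1, h2, hpq]
  have hker : RingHom.ker (aeval v : MvPolynomial (Fin 4) k →ₐ[k] MvPolynomial (Fin 4) k)
      = Ideal.span {L} := by
    apply le_antisymm
    · intro f hf
      have h1 := fatACI_sub_congr v (Ideal.span {L}) hvmem f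
      rw [RingHom.mem_ker] at hf
      rwa [hf, sub_zero] at h1
    · rw [Ideal.span_le, Set.singleton_subset_iff]
      simpa [RingHom.mem_ker] using hvL
  rw [← Ideal.span_singleton_prime hL0, ← hker]
  exact RingHom.ker_isPrime _

lemma fatACI_not_dvd_of_killer {P Q : MvPolynomial (Fin 4) k}
    (φ : MvPolynomial (Fin 4) k →ₐ[k] MvPolynomial (Fin 4) k)
    (hP : φ P = 0) (hQ : φ Q ≠ 0) : ¬ P ∣ Q := by
  rintro ⟨r, rfl⟩
  rw [map_mul, hP, zero_mul] at hQ
  exact hQ rfl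

lemma fatACI_indep_det {i j : Fin 4} (hij : i ≠ j) {a b a' b' : k}
    (hLI : LinearIndependent k ![(C a * X i + C b * X j : MvPolynomial (Fin 4) k),
      C a' * X i + C b' * X j]) : a * b' - a' * b ≠ 0 := by
  intro hdet
  have hpair := LinearIndependent.pair_iff.mp hLI
  have hcomb : ∀ s t : k, s • (C a * X i + C b * X j : MvPolynomial (Fin 4) k)
      + t • (C a' * X i + C b' * X j) = C (s*a + t*a') * X i + C (s*b + t*b') * X j := by
    intro s t
    rw [smul_eq_C_mul, smul_eq_C_mul, map_add, map_mul, map_mul, map_add, map_mul, map_mul]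
    ring
  have h1 := hpair a' (-a) (by
    rw [hcomb]
    have e1 : a' * a + (-a) * a' = 0 := by ring
    have e2 : a' * b + (-a) * b' = 0 := by linear_combination -hdet
    rw [e1, e2]; simp)
  have ha : a = 0 := neg_eq_zero.mp h1.2
  have ha' : a' = 0 := h1.1
  have h2 := hpair b' (-b) (by
    rw [hcomb]
    have e1 : b' * a + (-b) * a' = 0 := by rw [ha, ha']; ring
    have e2 : b' * b + (-b) * b' = 0 := by ring
    rw [e1, e2]; simp)
  have hb : b = 0 := neg_eq_zero.mp h2.2
  have hb' : b' = 0 := h2.1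
  have := hLI.ne_zero 0
  simp [ha, hb] at this

/-- The core case: a single linear form in `x2,x3` can be cancelled modulo the ideal
generated by a linear form in `x0,x1` and an independent linear form in `x2,x3`. -/
lemma fatACI_core_col {a b c d c' d' : k}
    (hH : ¬(a = 0 ∧ b = 0)) (hV' : ¬(c = 0 ∧ d = 0)) (hdet : c' * d - d' * c ≠ 0) :
    ∀ g : MvPolynomial (Fin 4) k,
      (C c' * X 2 + C d' * X 3) * g ∈
        Ideal.span {C a * X (0 : Fin 4) + C b * X 1, C c * X 2 + C d * X 3} →
      g ∈ Ideal.span {C a * X (0 : Fin 4) + C b * X 1, C c * X 2 + C d * X 3} := by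
  classical
  obtain ⟨p0, p1, h0, h1, hz01, -⟩ := fatACI_kill_pair (i := (0:Fin 4)) (j := 1) (by decide) hH
  obtain ⟨p2, p3, h2, h3, hz23, hne23⟩ := fatACI_kill_pair (i := (2:Fin 4)) (j := 3) (by decide) hV'
  set L1 : MvPolynomial (Fin 4) k := C a * X 0 + C b * X 1 with hL1def
  set L2 : MvPolynomial (Fin 4) k := C c * X 2 + C d * X 3 with hL2def
  set v : Fin 4 → MvPolynomial (Fin 4) k :=
    fun l => if l = 0 then p0 else if l = 1 then p1 else if l = 2 then p2 else p3 with hvdef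
  have hv0 : v 0 = p0 := rfl
  have hv1 : v 1 = p1 := rfl
  have hv2 : v 2 = p2 := rfl
  have hv3 : v 3 = p3 := rfl
  have hsub1 : Ideal.span {L1} ≤ Ideal.span ({L1, L2} : Set (MvPolynomial (Fin 4) k)) :=
    Ideal.span_mono (by simp)
  have hsub2 : Ideal.span {L2} ≤ Ideal.span ({L1, L2} : Set (MvPolynomial (Fin 4) k)) :=
    Ideal.span_mono (by simp)
  have hvmem : ∀ l, X l - v l ∈ Ideal.span ({L1, L2} : Set (MvPolynomial (Fin 4) k)) := by
    intro l
    fin_cases l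
    · exact hsub1 (hv0 ▸ h0)
    · exact hsub1 (hv1 ▸ h1)
    · exact hsub2 (hv2 ▸ h2)
    · exact hsub2 (hv3 ▸ h3)
  have hCa : ∀ r : k, aeval v (C r : MvPolynomial (Fin 4) k) = C r := fun r => by
    rw [aeval_C, algebraMap_eq]
  have hφL1 : aeval v L1 = 0 := by
    rw [hL1def, map_add, map_mul, map_mul, hCa, hCa, aeval_X, aeval_X, hv0, hv1, hz01]
  have hφL2 : aeval v L2 = 0 := by
    rw [hL2def, map_add, map_mul, map_mul, hCa, hCa, aeval_X, aeval_X, hv2, hv3, hz23]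
  have hφV : aeval v (C c' * X 2 + C d' * X 3) = C c' * p2 + C d' * p3 := by
    rw [map_add, map_mul, map_mul, hCa, hCa, aeval_X, aeval_X, hv2, hv3]
  intro g hg
  obtain ⟨s, t, hst⟩ := Ideal.mem_span_pair.mp hg
  have hφ := congrArg (aeval v) hst
  rw [map_add, map_mul, map_mul, hφL1, hφL2, mul_zero, mul_zero, add_zero, map_mul, hφV] at hφ
  have hφg : aeval v g = 0 := by
    rcases mul_eq_zero.mp hφ.symm with hh | hh
    · exact absurd hh (hne23 c' d' hdet)
    · exact hh
  have := fatACI_sub_congr v (Ideal.span ({L1, L2} : Set (MvPolynomial (Fin 4) k))) hvmem g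
  rwa [hφg, sub_zero] at this

end FatACIMvAux

/-- Remark 3.2 + Proposition 2.9: the intersection
`(U1·J_{Z1}) ∩ (Q1^{m11} Q2^{m21}·(Q1,U2)^{(m12-m11)_+}) = U1 Q1^{m11} Q2^{m21}·(Q1,U2)^{(m12-m11)_+}`. -/
theorem fat_ACI_intersection
    {k : Type*} [Field k]
    (α1 α2 β1 β2 : ℕ) (hα1 : 0 < α1) (hα2 : 0 < α2) (hβ1 : 0 < β1) (hβ2 : 0 < β2)
    (H V : ℕ → MvPolynomial (Fin 4) k)
    (hH : ∀ i < α1 + α2, H i ∈ Submodule.span k ({X 0, X 1} : Set (MvPolynomial (Fin 4) k)))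
    (hV : ∀ j < β1 + β2, V j ∈ Submodule.span k ({X 2, X 3} : Set (MvPolynomial (Fin 4) k)))
    (hHind : ∀ i < α1 + α2, ∀ j < α1 + α2, i ≠ j → LinearIndependent k ![H i, H j])
    (hVind : ∀ i < β1 + β2, ∀ j < β1 + β2, i ≠ j → LinearIndependent k ![V i, V j])
    (Q1 Q2 U1 U2 : MvPolynomial (Fin 4) k)
    (hQ1 : Q1 = ∏ i ∈ Finset.range α1, H i)
    (hQ2 : Q2 = ∏ i ∈ Finset.Ico α1 (α1 + α2), H i)
    (hU1 : U1 = ∏ j ∈ Finset.range β1, V j)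
    (hU2 : U2 = ∏ j ∈ Finset.Ico β1 (β1 + β2), V j)
    (m11 m12 m21 : ℕ) (hm : m21 ≤ m12)
    (JZ1 : Ideal (MvPolynomial (Fin 4) k))
    (hJZ1 : JZ1 = Ideal.span {Q1, U1} ^ (m11 - 1) ⊓ Ideal.span {Q1, U2} ^ m12 ⊓
        Ideal.span {Q2, U1} ^ (m21 - 1)) :
    (Ideal.span {U1} * JZ1) ⊓
        (Ideal.span {Q1 ^ m11 * Q2 ^ m21} * Ideal.span {Q1, U2} ^ (m12 - m11)) =
      Ideal.span {U1 * Q1 ^ m11 * Q2 ^ m21} * Ideal.span {Q1, U2} ^ (m12 - m11) := by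
  classical
  -- coordinates of the linear forms
  have hcoordH : ∀ i, i < α1 + α2 → ∃ a b : k, H i = C a * X 0 + C b * X 1 := by
    intro i hi
    obtain ⟨a, b, hab⟩ := Submodule.mem_span_pair.mp (hH i hi)
    exact ⟨a, b, by rw [← hab, smul_eq_C_mul, smul_eq_C_mul]⟩
  have hcoordV : ∀ j, j < β1 + β2 → ∃ c d : k, V j = C c * X 2 + C d * X 3 := by
    intro j hj
    obtain ⟨c, d, hcd⟩ := Submodule.mem_span_pair.mp (hV j hj)
    exact ⟨c, d, by rw [← hcd, smul_eq_C_mul, smul_eq_C_mul]⟩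
  -- nonvanishing
  have hHne : ∀ i, i < α1 + α2 → H i ≠ 0 := by
    intro i hi
    have h2 : (if i = 0 then 1 else 0) < α1 + α2 := by split <;> omega
    have hne : i ≠ (if i = 0 then 1 else 0) := by split <;> omega
    have := (hHind i hi _ h2 hne).ne_zero 0
    simpa using this
  have hVne : ∀ j, j < β1 + β2 → V j ≠ 0 := by
    intro j hj
    have h2 : (if j = 0 then 1 else 0) < β1 + β2 := by split <;> omega
    have hne : j ≠ (if j = 0 then 1 else 0) := by split <;> omega
    have := (hVind j hj _ h2 hne).ne_zero 0
    simpa using this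
  have hHnb : ∀ i (hi : i < α1 + α2) a b, H i = C a * X 0 + C b * X 1 → ¬(a = 0 ∧ b = 0) := by
    rintro i hi a b hab ⟨rfl, rfl⟩
    exact hHne i hi (by rw [hab]; simp)
  have hVnb : ∀ j (hj : j < β1 + β2) c d, V j = C c * X 2 + C d * X 3 → ¬(c = 0 ∧ d = 0) := by
    rintro j hj c d hcd ⟨rfl, rfl⟩
    exact hVne j hj (by rw [hcd]; simp)
  -- primality
  have hPrimeH : ∀ i, i < α1 + α2 → Prime (H i) := by
    intro i hi
    obtain ⟨a, b, hab⟩ := hcoordH i hi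
    rw [hab]
    exact fatACI_prime_linear (by decide) (hHnb i hi a b hab)
  have hPrimeV : ∀ j, j < β1 + β2 → Prime (V j) := by
    intro j hj
    obtain ⟨c, d, hcd⟩ := hcoordV j hj
    rw [hcd]
    exact fatACI_prime_linear (by decide) (hVnb j hj c d hcd)
  -- cross non-divisibility
  have hCrossHV : ∀ i, i < α1 + α2 → ∀ j, j < β1 + β2 → ¬ H i ∣ V j := by
    intro i hi j hj
    obtain ⟨a, b, hab⟩ := hcoordH i hi
    obtain ⟨c, d, hcd⟩ := hcoordV j hj
    set w : Fin 4 → MvPolynomial (Fin 4) k :=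
      fun l => if l = 0 then 0 else if l = 1 then 0 else X l with hwdef
    have hCa : ∀ r : k, aeval w (C r : MvPolynomial (Fin 4) k) = C r := fun r => by
      rw [aeval_C, algebraMap_eq]
    apply fatACI_not_dvd_of_killer (aeval w)
    · rw [hab, map_add, map_mul, map_mul, hCa, hCa, aeval_X, aeval_X]
      show C a * w 0 + C b * w 1 = 0
      simp [w]
    · have hw2 : w 2 = X 2 := rfl
      have hw3 : w 3 = X 3 := rfl
      rw [hcd, map_add, map_mul, map_mul, hCa, hCa, aeval_X, aeval_X, hw2, hw3, ← hcd]
      exact hVne j hj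
  have hCrossVH : ∀ j, j < β1 + β2 → ∀ i, i < α1 + α2 → ¬ V j ∣ H i := by
    intro j hj i hi
    obtain ⟨a, b, hab⟩ := hcoordH i hi
    obtain ⟨c, d, hcd⟩ := hcoordV j hj
    set w : Fin 4 → MvPolynomial (Fin 4) k :=
      fun l => if l = 2 then 0 else if l = 3 then 0 else X l with hwdef
    have hCa : ∀ r : k, aeval w (C r : MvPolynomial (Fin 4) k) = C r := fun r => by
      rw [aeval_C, algebraMap_eq]
    apply fatACI_not_dvd_of_killer (aeval w)
    · rw [hcd, map_add, map_mul, map_mul, hCa, hCa, aeval_X, aeval_X]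
      show C c * w 2 + C d * w 3 = 0
      simp [w]
    · have hw0 : w 0 = X 0 := rfl
      have hw1 : w 1 = X 1 := rfl
      rw [hab, map_add, map_mul, map_mul, hCa, hCa, aeval_X, aeval_X, hw0, hw1, ← hab]
      exact hHne i hi
  -- nonzero products
  have hQ1ne : Q1 ≠ 0 := by
    rw [hQ1]
    exact Finset.prod_ne_zero_iff.mpr fun i hi => hHne i (by
      have := Finset.mem_range.mp hi; omega)
  have hQ2ne : Q2 ≠ 0 := by
    rw [hQ2]
    exact Finset.prod_ne_zero_iff.mpr fun i hi => hHne i (by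
      have := Finset.mem_Ico.mp hi; omega)
  have hU2ne : U2 ≠ 0 := by
    rw [hU2]
    exact Finset.prod_ne_zero_iff.mpr fun j hj => hVne j (by
      have := Finset.mem_Ico.mp hj; omega)
  -- U2 is relatively prime to Q1
  have hVQ1 : ∀ j, j < β1 + β2 → ¬ V j ∣ Q1 := by
    intro j hj hdvd
    rw [hQ1] at hdvd
    obtain ⟨i, hi, hdvd'⟩ := (Prime.dvd_finset_prod_iff (hPrimeV j hj) _).mp hdvd
    exact hCrossVH j hj i (by have := Finset.mem_range.mp hi; omega) hdvd'
  have hrelU2Q1 : IsRelPrime U2 Q1 := by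
    rw [hU2]
    apply IsRelPrime.prod_left
    intro j hj
    have hj' : j < β1 + β2 := (Finset.mem_Ico.mp hj).2
    exact fatACI_relPrime_of_prime_not_dvd (hPrimeV j hj') (hVQ1 j hj')
  have hcanU2Q1 : ∀ x, U2 ∣ Q1 * x → U2 ∣ x := fun x hx => hrelU2Q1.dvd_of_dvd_mul_left hx
  -- the core colon property for single factors of U1
  have hKEY : ∀ jj, jj < β1 → ∀ m : ℕ, ∀ g, V jj * g ∈ Ideal.span {Q1, U2 ^ m} →
      g ∈ Ideal.span {Q1, U2 ^ m} := by
    intro jj hjj m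
    have hjjlt : jj < β1 + β2 := by omega
    obtain ⟨c', d', hc'd'⟩ := hcoordV jj hjjlt
    -- colon property against a single V j' over Q1
    have hcolQ1single : ∀ j', β1 ≤ j' → j' < β1 + β2 →
        ∀ g, V jj * g ∈ Ideal.span {Q1, V j'} → g ∈ Ideal.span {Q1, V j'} := by
      intro j' hj'1 hj'2
      obtain ⟨c, d, hcd⟩ := hcoordV j' hj'2
      have hdet : c' * d - d' * c ≠ 0 := by
        have hne : jj ≠ j' := by omega
        have hLI := hVind jj hjjlt j' hj'2 hne
        rw [hc'd', hcd] at hLI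
        have := fatACI_indep_det (by decide) hLI
        intro hcon
        exact this (by linear_combination hcon)
      -- core for each factor of Q1
      have hcore : ∀ i, i < α1 + α2 → ∀ g, V jj * g ∈ Ideal.span {H i, V j'} →
          g ∈ Ideal.span {H i, V j'} := by
        intro i hi
        obtain ⟨a, b, hab⟩ := hcoordH i hi
        rw [hab, hcd, hc'd']
        exact fatACI_core_col (hHnb i hi a b hab) (hVnb j' hj'2 c d hcd) hdet
      rw [hQ1]
      -- build up over the product defining Q1
      have hP : (∀ x, V j' ∣ (∏ i ∈ Finset.range α1, H i) * x → V j' ∣ x) ∧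
          (∀ g, V jj * g ∈ Ideal.span {∏ i ∈ Finset.range α1, H i, V j'} →
            g ∈ Ideal.span {∏ i ∈ Finset.range α1, H i, V j'}) := by
        refine Finset.prod_induction (fun i => H i)
          (fun A => (∀ x, V j' ∣ A * x → V j' ∣ x) ∧
            (∀ g, V jj * g ∈ Ideal.span {A, V j'} → g ∈ Ideal.span {A, V j'})) ?_ ?_ ?_
        · intro x y hx hy
          constructor
          · intro z hz
            rw [mul_assoc] at hz
            exact hy.1 z (hx.1 (y * z) hz)
          · exact fatACI_compA (hVne j' hj'2) hx.1 hx.2 hy.2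
        · constructor
          · intro z hz; rwa [one_mul] at hz
          · intro g hg
            have htop : Ideal.span {(1 : MvPolynomial (Fin 4) k), V j'} = ⊤ :=
              Ideal.eq_top_iff_one _ |>.mpr (Ideal.subset_span (by simp))
            rw [htop]; trivial
        · intro i hi
          have hilt : i < α1 + α2 := by have := Finset.mem_range.mp hi; omega
          constructor
          · intro z hz
            rcases (hPrimeV j' hj'2).2.2 _ _ hz with hl | hr
            · exact absurd hl (hCrossVH j' hj'2 i hilt)
            · exact hr
          · exact hcore i hilt
      exact hP.2
    -- "nice" predicate for powers of U2 over Q1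
    have hPU2 : U2 ≠ 0 ∧ (∀ x, U2 ∣ Q1 * x → U2 ∣ x) ∧
        (∀ g, V jj * g ∈ Ideal.span {Q1, U2} → g ∈ Ideal.span {Q1, U2}) := by
      rw [hU2]
      refine Finset.prod_induction (fun j => V j)
        (fun B => B ≠ 0 ∧ (∀ x, B ∣ Q1 * x → B ∣ x) ∧
          (∀ g, V jj * g ∈ Ideal.span {Q1, B} → g ∈ Ideal.span {Q1, B})) ?_ ?_ ?_
      · intro x y hx hy
        exact fatACI_nice_mul hx hy
      · exact fatACI_nice_one
      · intro j' hj'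
        have h1 : β1 ≤ j' := (Finset.mem_Ico.mp hj').1
        have h2 : j' < β1 + β2 := (Finset.mem_Ico.mp hj').2
        refine ⟨hVne j' h2, ?_, hcolQ1single j' h1 h2⟩
        intro z hz
        rcases (hPrimeV j' h2).2.2 _ _ hz with hl | hr
        · exact absurd hl (hVQ1 j' h2)
        · exact hr
    have hPU2m : U2 ^ m ≠ 0 ∧ (∀ x, U2 ^ m ∣ Q1 * x → U2 ^ m ∣ x) ∧
        (∀ g, V jj * g ∈ Ideal.span {Q1, U2 ^ m} → g ∈ Ideal.span {Q1, U2 ^ m}) := by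
      induction m with
      | zero => simpa [pow_zero] using (fatACI_nice_one (v := V jj) (a := Q1))
      | succ n ihn => rw [pow_succ]; exact fatACI_nice_mul ihn hPU2
    exact hPU2m.2.2
  -- colon property for all of U1
  have hKEYU1 : ∀ m : ℕ, ∀ g, U1 * g ∈ Ideal.span {Q1, U2 ^ m} →
      g ∈ Ideal.span {Q1, U2 ^ m} := by
    intro m
    have haux : ∀ S : Finset ℕ, (∀ j ∈ S, j < β1) → ∀ g,
        (∏ j ∈ S, V j) * g ∈ Ideal.span {Q1, U2 ^ m} → g ∈ Ideal.span {Q1, U2 ^ m} := by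
      intro S
      induction S using Finset.induction_on with
      | empty => intro _ g hg; simpa using hg
      | insert a T hnm ih =>
          intro hS g hg
          rw [Finset.prod_insert hnm, mul_assoc] at hg
          exact ih (fun j hj => hS j (Finset.mem_insert_of_mem hj)) g
            (hKEY a (hS a (Finset.mem_insert_self a T)) m _ hg)
    intro g hg
    rw [hU1] at hg
    exact haux (Finset.range β1) (fun j hj => Finset.mem_range.mp hj) g hg
  -- basic memberships
  have hU2mem : U2 ∈ Ideal.span ({Q1, U2} : Set (MvPolynomial (Fin 4) k)) :=
    Ideal.subset_span (by simp)
  have hQ1mem : Q1 ∈ Ideal.span ({Q1, U2} : Set (MvPolynomial (Fin 4) k)) :=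
    Ideal.subset_span (by simp)
  -- the main colon lemma, by induction
  have hCL : ∀ d e f, U1 * f ∈ Ideal.span {Q1, U2} ^ e ⊔ Ideal.span {U2 ^ d} →
      f ∈ Ideal.span {Q1, U2} ^ e ⊔ Ideal.span {U2 ^ d} := by
    intro d e
    induction e with
    | zero => intro f _; simp [Ideal.one_eq_top]
    | succ e ih =>
        intro f hf
        obtain ⟨m, hmle, hmd, hUm⟩ : ∃ m, m ≤ e + 1 ∧ m ≤ d ∧ ∀ x : MvPolynomial (Fin 4) k,
            U2 ^ m * x ∈ Ideal.span {Q1, U2} ^ (e+1) ⊔ Ideal.span {U2 ^ d} := by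
          rcases le_total (e+1) d with hc | hc
          · exact ⟨e+1, le_rfl, hc, fun x =>
              Submodule.mem_sup_left (Ideal.mul_mem_right x _ (Ideal.pow_mem_pow hU2mem _))⟩
          · exact ⟨d, hc, le_rfl, fun x =>
              Submodule.mem_sup_right (Ideal.mul_mem_right x _
                (Ideal.mem_span_singleton_self _))⟩
        have hf' : U1 * f ∈ Ideal.span {Q1, U2 ^ m} := by
          have hle : Ideal.span {Q1, U2} ^ (e+1) ⊔ Ideal.span {U2 ^ d} ≤
              Ideal.span {Q1} ⊔ Ideal.span {U2 ^ m} := by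
            refine sup_le (le_trans (fatACI_pow_pair_le Q1 U2 (e+1)) ?_) ?_
            · exact sup_le_sup_left (Ideal.span_singleton_le_span_singleton.mpr
                (pow_dvd_pow U2 hmle)) _
            · exact le_sup_of_le_right (Ideal.span_singleton_le_span_singleton.mpr
                (pow_dvd_pow U2 hmd))
          rw [Ideal.span_insert]
          exact hle hf
        obtain ⟨p, q', hpq'⟩ := Ideal.mem_span_pair.mp (hKEYU1 m f hf')
        have hQ1Up : Q1 * (U1 * p) ∈ Ideal.span {Q1, U2} ^ (e+1) ⊔ Ideal.span {U2 ^ d} := by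
          have heq : Q1 * (U1 * p) = U1 * f - U2 ^ m * (U1 * q') := by
            linear_combination U1 * hpq'
          rw [heq]
          exact Submodule.sub_mem _ hf (hUm (U1 * q'))
        have hp : p ∈ Ideal.span {Q1, U2} ^ e ⊔ Ideal.span {U2 ^ d} :=
          ih p (fatACI_CQ hU2ne hcanU2Q1 e d (U1 * p) hQ1Up)
        rw [← hpq']
        refine Submodule.add_mem _ ?_ (by rw [mul_comm q' (U2 ^ m)]; exact hUm q')
        obtain ⟨y, hy, z, hz, hyz⟩ := Submodule.mem_sup.mp hp
        rw [← hyz, add_mul]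
        refine Submodule.add_mem _ (Submodule.mem_sup_left ?_) (Submodule.mem_sup_right ?_)
        · rw [pow_succ]
          exact Ideal.mul_mem_mul hy hQ1mem
        · exact Ideal.mul_mem_right Q1 _ hz
  -- Lemma B : U1 can be cancelled modulo span{Q1,U2}^E
  have hLemB : ∀ f, U1 * f ∈ Ideal.span {Q1, U2} ^ (m12 - m11) →
      f ∈ Ideal.span {Q1, U2} ^ (m12 - m11) := by
    intro f hf
    have hsub : Ideal.span {U2 ^ (m12 - m11)} ≤ Ideal.span {Q1, U2} ^ (m12 - m11) :=
      (Ideal.span_singleton_le_iff_mem _).mpr (Ideal.pow_mem_pow hU2mem _)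
    have := hCL (m12 - m11) (m12 - m11) f (Submodule.mem_sup_left hf)
    obtain ⟨y, hy, z, hz, hyz⟩ := Submodule.mem_sup.mp this
    rw [← hyz]
    exact Submodule.add_mem _ hy (hsub hz)
  -- relative primality of Q1^m11 * Q2^m21 with U1
  have hrelQU : IsRelPrime (Q1 ^ m11 * Q2 ^ m21) U1 := by
    have hfac : ∀ i, i < α1 + α2 → IsRelPrime (H i) U1 := by
      intro i hi
      rw [hU1]
      apply IsRelPrime.prod_right
      intro j hj
      have hjlt : j < β1 + β2 := by have := Finset.mem_range.mp hj; omega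
      exact fatACI_relPrime_of_prime_not_dvd (hPrimeH i hi) (hCrossHV i hi j hjlt)
    have h1 : IsRelPrime Q1 U1 := by
      rw [hQ1]
      apply IsRelPrime.prod_left
      intro i hi
      exact hfac i (by have := Finset.mem_range.mp hi; omega)
    have h2 : IsRelPrime Q2 U1 := by
      rw [hQ2]
      apply IsRelPrime.prod_left
      intro i hi
      exact hfac i (Finset.mem_Ico.mp hi).2
    exact IsRelPrime.mul_left h1.pow_left h2.pow_left
  have hcne : Q1 ^ m11 * Q2 ^ m21 ≠ 0 :=
    mul_ne_zero (pow_ne_zero _ hQ1ne) (pow_ne_zero _ hQ2ne)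
  -- notation
  set K : Ideal (MvPolynomial (Fin 4) k) := Ideal.span {Q1, U2} ^ (m12 - m11) with hK
  have hsplit : Ideal.span {U1 * Q1 ^ m11 * Q2 ^ m21} =
      Ideal.span {U1} * Ideal.span {Q1 ^ m11 * Q2 ^ m21} := by
    rw [Ideal.span_singleton_mul_span_singleton, mul_assoc]
  apply le_antisymm
  · -- hard inclusion
    intro x hx
    obtain ⟨hx1, hx2⟩ := Submodule.mem_inf.mp hx
    obtain ⟨h, hhJ, hUh⟩ := Ideal.mem_span_singleton_mul.mp hx1
    obtain ⟨g, hgK, hcg⟩ := Ideal.mem_span_singleton_mul.mp hx2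
    have hcd : (Q1 ^ m11 * Q2 ^ m21) ∣ U1 * h := ⟨g, by rw [hUh, ← hcg]⟩
    obtain ⟨h', hh'⟩ := hrelQU.dvd_of_dvd_mul_left hcd
    have hgU1h' : g = U1 * h' := by
      apply mul_left_cancel₀ hcne
      rw [hcg, ← hUh, hh']
      ring
    have hh'K : h' ∈ K := hLemB h' (by rw [← hgU1h']; exact hgK)
    refine Ideal.mem_span_singleton_mul.mpr ⟨h', hh'K, ?_⟩
    rw [← hUh, hh']
    ring
  · -- easy inclusion
    rw [hsplit, mul_assoc]
    refine le_inf ?_ ?_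
    · refine Ideal.mul_mono_right ?_
      rw [hJZ1]
      refine le_inf (le_inf ?_ ?_) ?_
      · -- ≤ span{Q1,U1}^(m11-1)
        refine le_trans Ideal.mul_le_left ?_
        rw [Ideal.span_singleton_le_iff_mem]
        refine Ideal.mul_mem_right _ _ ?_
        exact Ideal.pow_le_pow_right (Nat.sub_le m11 1)
          (Ideal.pow_mem_pow (Ideal.subset_span (by simp)) m11)
      · -- ≤ span{Q1,U2}^m12
        have hstep : Ideal.span {Q1 ^ m11 * Q2 ^ m21} ≤ Ideal.span {Q1, U2} ^ m11 := by
          rw [Ideal.span_singleton_le_iff_mem]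
          exact Ideal.mul_mem_right _ _ (Ideal.pow_mem_pow hQ1mem m11)
        calc Ideal.span {Q1 ^ m11 * Q2 ^ m21} * K
            ≤ Ideal.span {Q1, U2} ^ m11 * Ideal.span {Q1, U2} ^ (m12 - m11) :=
              Ideal.mul_mono hstep le_rfl
          _ = Ideal.span {Q1, U2} ^ (m11 + (m12 - m11)) := by rw [pow_add]
          _ ≤ Ideal.span {Q1, U2} ^ m12 := Ideal.pow_le_pow_right (by omega)
      · -- ≤ span{Q2,U1}^(m21-1)
        refine le_trans Ideal.mul_le_left ?_
        rw [Ideal.span_singleton_le_iff_mem, mul_comm]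
        refine Ideal.mul_mem_right _ _ ?_
        exact Ideal.pow_le_pow_right (Nat.sub_le m21 1)
          (Ideal.pow_mem_pow (Ideal.subset_span (by simp)) m21)
    · exact Ideal.mul_le_right
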